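/- Let φ be the rotation of ℝ³ with matrix [[3/4, −√(3/8), 1/4], [√(3/8), 1/2, −√(3/8)], [1/4, √(3/8), 3/4]] (rotation by π/3 about the axis (1/√2, 0, 1/√2)). Let p¹ = (−2, −3+√6, 16−3√6), p² = (1, 3−4√6, −19+3√6), p³ = (2, −3+3√6, 8−3√6), p⁴ = (−1, 3, −5+3√6). Then p¹, p², p³, p⁴ are affinely independent, and π_z φ p¹ = π_z p², π_z φ p² = π_z p³, π_z φ p³ = π_z p⁴, π_z φ p⁴ = π_z p¹. -/

import Mathlib

lemma sqrt38 : Real.sqrt (3/8) = Real.sqrt 6 / 4 := by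
  have h4 : Real.sqrt 16 = 4 := by
    rw [show (16:ℝ) = 4^2 by norm_num, Real.sqrt_sq (by norm_num : (0:ℝ) ≤ 4)]
  rw [show (3:ℝ)/8 = 6/16 by norm_num, Real.sqrt_div (by norm_num) 16, h4]

lemma sq6 : Real.sqrt 6 * Real.sqrt 6 = 6 := Real.mul_self_sqrt (by norm_num)

/-- An explicit full-dimensional tetrahedron realizing the four-cycle
case: with φ the rotation by π/3 about the axis (1/√2, 0, 1/√2), the given points are
affinely independent and satisfy π_z φ p⁽ⁱ⁾ = π_z p⁽ⁱ⁺¹⁾ (indices mod 4). -/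
theorem stmt15 :
    let φ : Matrix (Fin 3) (Fin 3) ℝ :=
      !![3/4, -Real.sqrt (3/8), 1/4;
         Real.sqrt (3/8), 1/2, -Real.sqrt (3/8);
         1/4, Real.sqrt (3/8), 3/4]
    let s := Real.sqrt 6
    let p : Fin 4 → (Fin 3 → ℝ) :=
      ![![-2, -3 + s, 16 - 3*s],
        ![1, 3 - 4*s, -19 + 3*s],
        ![2, -3 + 3*s, 8 - 3*s],
        ![-1, 3, -5 + 3*s]]
    let πz : (Fin 3 → ℝ) → (Fin 2 → ℝ) := fun x => ![x 0, x 1]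
    AffineIndependent ℝ p ∧
    πz (φ.mulVec (p 0)) = πz (p 1) ∧
    πz (φ.mulVec (p 1)) = πz (p 2) ∧
    πz (φ.mulVec (p 2)) = πz (p 3) ∧
    πz (φ.mulVec (p 3)) = πz (p 0) := by
  intro φ s p πz
  have hs2 : s * s = 6 := sq6
  have hs38 : Real.sqrt (3/8) = s / 4 := sqrt38
  constructor
  · rw [affineIndependent_iff_linearIndependent_vsub ℝ p 0]
    set M : Matrix (Fin 3) (Fin 3) ℝ :=
      !![3, 6-5*s, -35+6*s; 4, 2*s, -8; 1, 6-s, -21+6*s] with hMdef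
    have hM : LinearIndependent ℝ (fun i => M i) := by
      rw [show (fun i => M i) = M.row from rfl, Matrix.linearIndependent_rows_iff_isUnit, Matrix.isUnit_iff_isUnit_det,
        isUnit_iff_ne_zero]
      have hdet : M.det = 480 - 320 * s := by
        rw [Matrix.det_fin_three]
        simp [hMdef]
        ring_nf
        nlinarith [hs2]
      rw [hdet]
      have h32 : (3:ℝ)/2 < s := by nlinarith [hs2, Real.sqrt_nonneg 6]
      nlinarith
    have hf : Function.Injective
        (fun i : {x : Fin 4 // x ≠ 0} => (⟨(i : Fin 4).val - 1, by omega⟩ : Fin 3)) := by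
      rintro ⟨⟨a, ha⟩, ha0⟩ ⟨⟨b, hb⟩, hb0⟩ h
      simp only [Subtype.mk_eq_mk, Fin.mk_eq_mk] at *
      have : a ≠ 0 := fun h' => ha0 (by simp [Fin.ext_iff, h'])
      have : b ≠ 0 := fun h' => hb0 (by simp [Fin.ext_iff, h'])
      omega
    have := hM.comp _ hf
    convert this using 1
    on_goal 2 => rfl
    on_goal 2 => rfl
    funext i
    rcases i with ⟨i, hi0⟩
    fin_cases i
    · simp at hi0
    all_goals
      simp only [Function.comp]
      funext j
      fin_cases j <;>
        simp [hMdef, p, vsub_eq_sub, Pi.sub_apply] <;> ring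
  refine ⟨?_, ?_, ?_, ?_⟩ <;>
  · funext j
    fin_cases j <;>
    · simp [πz, φ, p, Matrix.mulVec, dotProduct, Fin.sum_univ_three, hs38]
      nlinarith [hs2]
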